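/- Let N ≥ 1, u, v, w ∈ ℝ^N, and let F : ℝ^N → ℝ be three times continuously differentiable such that for some C ≥ 0 and p ≥ 1, |F(x)| ≤ C(1 + |x|)^p and the operator norms of DF(x), D²F(x) and D³F(x) are bounded by C(1 + |x|)^p for all x ∈ ℝ^N. Then ∫_{ℝ^N} F(x) ( ⟨x,u⟩⟨x,v⟩⟨x,w⟩ − ⟨u,v⟩⟨x,w⟩ − ⟨u,w⟩⟨x,v⟩ − ⟨v,w⟩⟨x,u⟩ ) dγ_N(x) = ∫_{ℝ^N} D³F(x)(u, v, w) dγ_N(x), where D³F(x) is the third total derivative of F at x, viewed as a trilinear map. -/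

import Mathlib

set_option maxHeartbeats 1000000
open MeasureTheory Real
open scoped RealInnerProductSpace NNReal ENNReal

variable {N : ℕ}
local notation "E" => EuclideanSpace ℝ (Fin N)

lemma integrable_exp_neg_quarter : Integrable (fun x : E => Real.exp (-(4:ℝ)⁻¹ * ‖x‖ ^ 2)) volume := by
  have h := (GaussianFourier.integrable_cexp_neg_mul_sq_norm_add (V := E)
    (b := (4:ℂ)⁻¹) (by norm_num) 0 0).norm
  refine h.congr ?_
  filter_upwards with x
  simp only [Complex.norm_exp]
  norm_num
  simp [← Complex.ofReal_pow]

lemma master (K a q : ℝ) (hq : 0 ≤ q) :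
    Integrable (fun x : E => K * ((1 + ‖x‖) ^ q * Real.exp (a * ‖x‖ - ‖x‖ ^ 2 / 2))) volume := by
  have hb : ∀ x : E, ‖K * ((1 + ‖x‖) ^ q * Real.exp (a * ‖x‖ - ‖x‖ ^ 2 / 2))‖
      ≤ (|K| * Real.exp ((q + |a|) ^ 2)) * Real.exp (-(4:ℝ)⁻¹ * ‖x‖ ^ 2) := by
    intro x
    set s := ‖x‖ with hs
    have hs0 : 0 ≤ s := norm_nonneg _
    have h1 : (1 + s) ^ q ≤ Real.exp (q * s) := by
      calc (1 + s) ^ q ≤ (Real.exp s) ^ q := by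
            apply Real.rpow_le_rpow (by positivity) _ hq
            have := Real.add_one_le_exp s
            linarith
        _ = Real.exp (q * s) := by
            rw [← Real.exp_mul, mul_comm]
    have h2 : q * s + (a * s - s ^ 2 / 2) ≤ (q + |a|) ^ 2 + (-(4:ℝ)⁻¹ * s ^ 2) := by
      have : a * s ≤ |a| * s := mul_le_mul_of_nonneg_right (le_abs_self a) hs0
      nlinarith [sq_nonneg (s / 2 - (q + |a|)), abs_nonneg a]
    have h3 : (1 + s) ^ q * Real.exp (a * s - s ^ 2 / 2) ≤
        Real.exp ((q + |a|) ^ 2) * Real.exp (-(4:ℝ)⁻¹ * s ^ 2) := by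
      calc (1 + s) ^ q * Real.exp (a * s - s ^ 2 / 2)
          ≤ Real.exp (q * s) * Real.exp (a * s - s ^ 2 / 2) :=
            mul_le_mul_of_nonneg_right h1 (Real.exp_pos _).le
        _ = Real.exp (q * s + (a * s - s ^ 2 / 2)) := (Real.exp_add _ _).symm
        _ ≤ Real.exp ((q + |a|) ^ 2 + (-(4:ℝ)⁻¹ * s ^ 2)) := Real.exp_le_exp.2 h2
        _ = _ := Real.exp_add _ _
    rw [norm_mul, norm_mul]
    rw [Real.norm_eq_abs, Real.norm_eq_abs, Real.norm_eq_abs]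
    rw [abs_of_nonneg (by positivity : (0:ℝ) ≤ (1 + s) ^ q),
      abs_of_nonneg (Real.exp_pos _).le, mul_assoc]
    exact mul_le_mul_of_nonneg_left h3 (abs_nonneg K)
  exact (integrable_exp_neg_quarter.const_mul _).mono' (Continuous.aestronglyMeasurable (by
    exact continuous_const.mul (((continuous_const.add continuous_norm).rpow_const
      (fun x => Or.inr hq)).mul (((continuous_const.mul continuous_norm).sub
      ((continuous_norm.pow 2).div_const 2)).rexp)))) (ae_of_all _ hb)

noncomputable def stdGaussian (N : ℕ) : Measure (EuclideanSpace ℝ (Fin N)) :=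
  volume.withDensity fun x =>
    ENNReal.ofReal ((2 * π) ^ (-(N : ℝ) / 2) * Real.exp (-‖x‖ ^ 2 / 2))

lemma rho_pos (x : E) : 0 < (2 * π) ^ (-(N : ℝ) / 2) * Real.exp (-‖x‖ ^ 2 / 2) := by
  have : (0:ℝ) < 2 * π := by positivity
  positivity

lemma rho_continuous : Continuous (fun x : E => (2 * π) ^ (-(N : ℝ) / 2) * Real.exp (-‖x‖ ^ 2 / 2)) := by
  apply continuous_const.mul
  exact (((continuous_norm.pow 2).neg).div_const 2).rexp

lemma integral_std (g : E → ℝ) :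
    ∫ x, g x ∂(stdGaussian N)
      = ∫ x, g x * ((2 * π) ^ (-(N : ℝ) / 2) * Real.exp (-‖x‖ ^ 2 / 2)) ∂volume := by
  rw [stdGaussian]
  rw [show (fun x : E => ENNReal.ofReal ((2 * π) ^ (-(N : ℝ) / 2) * Real.exp (-‖x‖ ^ 2 / 2)))
      = fun x : E => ((Real.toNNReal ((2 * π) ^ (-(N : ℝ) / 2) * Real.exp (-‖x‖ ^ 2 / 2)) : ℝ≥0)
        : ℝ≥0∞) from rfl]
  rw [integral_withDensity_eq_integral_smul (rho_continuous.measurable.real_toNNReal) g]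
  congr 1
  ext x
  rw [NNReal.smul_def, Real.coe_toNNReal _ (rho_pos x).le, smul_eq_mul]
  ring

lemma integrable_std_iff (g : E → ℝ) :
    Integrable g (stdGaussian N) ↔
      Integrable (fun x => g x * ((2 * π) ^ (-(N : ℝ) / 2) * Real.exp (-‖x‖ ^ 2 / 2))) volume := by
  rw [stdGaussian, integrable_withDensity_iff (by
      exact rho_continuous.measurable.ennreal_ofReal) (ae_of_all _ fun x => ENNReal.ofReal_lt_top)]
  simp only [ENNReal.toReal_ofReal (rho_pos _).le]

lemma integrable_mu (f : E → ℝ) (hf : Continuous f) (K q : ℝ) (hq : 0 ≤ q)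
    (hb : ∀ x, |f x| ≤ K * (1 + ‖x‖) ^ q) : Integrable f (stdGaussian N) := by
  rw [integrable_std_iff]
  refine (master (K * (2 * π) ^ (-(N : ℝ) / 2)) 0 q hq).mono'
    ((hf.mul rho_continuous).aestronglyMeasurable) (ae_of_all _ fun x => ?_)
  have h1 : |f x * ((2 * π) ^ (-(N : ℝ) / 2) * Real.exp (-‖x‖ ^ 2 / 2))|
      ≤ (K * (1 + ‖x‖) ^ q) * ((2 * π) ^ (-(N : ℝ) / 2) * Real.exp (-‖x‖ ^ 2 / 2)) := by
    rw [abs_mul, abs_of_nonneg (rho_pos x).le]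
    exact mul_le_mul_of_nonneg_right (hb x) (rho_pos x).le
  rw [Real.norm_eq_abs]
  refine h1.trans (le_of_eq ?_)
  rw [show (0:ℝ) * ‖x‖ - ‖x‖ ^ 2 / 2 = -‖x‖ ^ 2 / 2 by ring]
  ring

lemma norm_add_le_aux (x : E) (t : ℝ) (w : E) (ht : |t| ≤ 1) : ‖x + t • w‖ ≤ ‖x‖ + ‖w‖ := by
  refine (norm_add_le _ _).trans ?_
  have : ‖t • w‖ = |t| * ‖w‖ := by rw [norm_smul, Real.norm_eq_abs]
  nlinarith [norm_nonneg w, norm_nonneg x, abs_nonneg t]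

lemma rpow_prod_bound (x w : E) (q : ℝ) (hq : 0 ≤ q) :
    (1 + (‖x‖ + ‖w‖)) ^ q ≤ (1 + ‖w‖) ^ q * (1 + ‖x‖) ^ q := by
  rw [← Real.mul_rpow (by positivity) (by positivity)]
  apply Real.rpow_le_rpow (by positivity) _ hq
  nlinarith [norm_nonneg x, norm_nonneg w]

lemma ibp (G : EuclideanSpace ℝ (Fin N) → ℝ) (hG : ContDiff ℝ 1 G) (w : E) (B q : ℝ) (hq : 0 ≤ q)
    (h0 : ∀ x, |G x| ≤ B * (1 + ‖x‖) ^ q)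
    (h1 : ∀ x, ‖fderiv ℝ G x‖ ≤ B * (1 + ‖x‖) ^ q) :
    ∫ x, G x * ⟪x, w⟫ ∂(stdGaussian N) = ∫ x, fderiv ℝ G x w ∂(stdGaussian N) := by
  have hB : 0 ≤ B := by
    have h := h0 0
    rw [norm_zero, add_zero, Real.one_rpow, mul_one] at h
    exact (abs_nonneg _).trans h
  set c : ℝ := (2 * π) ^ (-(N : ℝ) / 2) with hc_def
  have hc : 0 < c := by
    have : (0:ℝ) < 2 * π := by positivity
    positivity
  have hGd : Differentiable ℝ G := hG.differentiable one_ne_zero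
  have hG' : Continuous (fderiv ℝ G) := hG.continuous_fderiv one_ne_zero
  have hGρint : Integrable (fun x : E => G x * (c * Real.exp (-‖x‖ ^ 2 / 2))) volume := by
    have := (integrable_std_iff G).mp (integrable_mu G hG.continuous B q hq h0)
    simpa [mul_assoc] using this
  -- claim A
  have keyA := hasDerivAt_integral_of_dominated_loc_of_deriv_le (μ := volume) (x₀ := (0:ℝ))
    (s := Metric.ball 0 1) (Metric.ball_mem_nhds 0 one_pos)
    (F := fun t (x : E) => G (x + t • w) * (c * Real.exp (-‖x‖ ^ 2 / 2)))
    (F' := fun t (x : E) => fderiv ℝ G (x + t • w) w * (c * Real.exp (-‖x‖ ^ 2 / 2)))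
    (bound := fun x : E => (B * (1 + ‖w‖) ^ q * ‖w‖ * c) *
      ((1 + ‖x‖) ^ q * Real.exp (0 * ‖x‖ - ‖x‖ ^ 2 / 2)))
    (Filter.Eventually.of_forall (fun t =>
      ((hG.continuous.comp (continuous_add_right (t • w))).mul
        rho_continuous).aestronglyMeasurable))
    (by
      refine hGρint.congr (ae_of_all _ fun x => ?_)
      simp)
    (by
      exact (((ContinuousLinearMap.apply ℝ ℝ w).continuous.comp
        (hG'.comp (continuous_id.add continuous_const))).mul
        rho_continuous).aestronglyMeasurable)
    (ae_of_all _ (fun x t ht => by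
      have ht' : |t| ≤ 1 := by
        rw [Metric.mem_ball, Real.dist_eq, sub_zero] at ht
        exact ht.le
      have hnorm : ‖x + t • w‖ ≤ ‖x‖ + ‖w‖ := norm_add_le_aux x t w ht'
      have hb1 : |fderiv ℝ G (x + t • w) w| ≤ B * ((1 + ‖w‖) ^ q * (1 + ‖x‖) ^ q) * ‖w‖ := by
        calc |fderiv ℝ G (x + t • w) w| ≤ ‖fderiv ℝ G (x + t • w)‖ * ‖w‖ :=
              (fderiv ℝ G (x + t • w)).le_opNorm w
          _ ≤ (B * (1 + ‖x + t • w‖) ^ q) * ‖w‖ :=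
              mul_le_mul_of_nonneg_right (h1 _) (norm_nonneg w)
          _ ≤ (B * ((1 + ‖w‖) ^ q * (1 + ‖x‖) ^ q)) * ‖w‖ := by
              have : (1 + ‖x + t • w‖) ^ q ≤ (1 + ‖w‖) ^ q * (1 + ‖x‖) ^ q := by
                refine le_trans ?_ (rpow_prod_bound x w q hq)
                apply Real.rpow_le_rpow (by positivity) (by linarith) hq
              gcongr
      rw [Real.norm_eq_abs, abs_mul, abs_of_pos (by positivity : (0:ℝ) <
        c * Real.exp (-‖x‖ ^ 2 / 2))]
      calc |fderiv ℝ G (x + t • w) w| * (c * Real.exp (-‖x‖ ^ 2 / 2))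
          ≤ (B * ((1 + ‖w‖) ^ q * (1 + ‖x‖) ^ q) * ‖w‖) * (c * Real.exp (-‖x‖ ^ 2 / 2)) :=
            mul_le_mul_of_nonneg_right hb1 (by positivity)
        _ = (B * (1 + ‖w‖) ^ q * ‖w‖ * c) *
            ((1 + ‖x‖) ^ q * Real.exp (0 * ‖x‖ - ‖x‖ ^ 2 / 2)) := by
            rw [show (0:ℝ) * ‖x‖ - ‖x‖ ^ 2 / 2 = -‖x‖ ^ 2 / 2 by ring]
            ring))
    (master _ 0 q hq)
    (ae_of_all _ (fun x t _ => by
      have hcurve : HasDerivAt (fun s : ℝ => x + s • w) w t := by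
        simpa using ((hasDerivAt_id t).smul_const w).const_add x
      exact (((hGd (x + t • w)).hasFDerivAt.comp_hasDerivAt t hcurve).mul_const
        (c * Real.exp (-‖x‖ ^ 2 / 2)))))
  have hA := keyA.2
  simp only [zero_smul, add_zero] at hA
  -- expansion of the exponent
  have hfun : ∀ (x : E) (s : ℝ), -‖x - s • w‖ ^ 2 / 2
      = -(‖x‖ ^ 2 - 2 * (s * ⟪x, w⟫) + s ^ 2 * ‖w‖ ^ 2) / 2 := by
    intro x s
    rw [@norm_sub_sq_real, real_inner_smul_right, norm_smul, Real.norm_eq_abs, mul_pow, sq_abs]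
    try ring
  -- claim C
  have keyC := hasDerivAt_integral_of_dominated_loc_of_deriv_le (μ := volume) (x₀ := (0:ℝ))
    (s := Metric.ball 0 1) (Metric.ball_mem_nhds 0 one_pos)
    (F := fun t (x : E) => G x * (c * Real.exp (-‖x - t • w‖ ^ 2 / 2)))
    (F' := fun t (x : E) => G x * (c * Real.exp (-‖x - t • w‖ ^ 2 / 2) * (⟪x, w⟫ - t * ‖w‖ ^ 2)))
    (bound := fun x : E => (B * ‖w‖ * (1 + ‖w‖) * c) *
      ((1 + ‖x‖) ^ (q + 1) * Real.exp (‖w‖ * ‖x‖ - ‖x‖ ^ 2 / 2)))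
    (Filter.Eventually.of_forall (fun t => (hG.continuous.mul (continuous_const.mul
      ((((continuous_id.sub continuous_const).norm.pow 2).neg.div_const 2).rexp))).aestronglyMeasurable))
    (by
      refine hGρint.congr (ae_of_all _ fun x => ?_)
      simp)
    ((hG.continuous.mul ((continuous_const.mul
      ((((continuous_id.sub continuous_const).norm.pow 2).neg.div_const 2).rexp)).mul
      ((continuous_id.inner continuous_const).sub continuous_const))).aestronglyMeasurable)
    (ae_of_all _ (fun x t ht => by
      have ht' : |t| ≤ 1 := by
        rw [Metric.mem_ball, Real.dist_eq, sub_zero] at ht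
        exact ht.le
      have hCS : |⟪x, w⟫| ≤ ‖x‖ * ‖w‖ := abs_real_inner_le_norm x w
      have habs : |t * ⟪x, w⟫| ≤ ‖x‖ * ‖w‖ := by
        rw [abs_mul]
        calc |t| * |⟪x, w⟫| ≤ 1 * (‖x‖ * ‖w‖) :=
              mul_le_mul ht' hCS (abs_nonneg _) one_pos.le
          _ = ‖x‖ * ‖w‖ := one_mul _
      have hexp : Real.exp (-‖x - t • w‖ ^ 2 / 2) ≤ Real.exp (‖w‖ * ‖x‖ - ‖x‖ ^ 2 / 2) := by
        apply Real.exp_le_exp.2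
        rw [hfun x t]
        nlinarith [le_abs_self (t * ⟪x, w⟫), habs, mul_nonneg (sq_nonneg t) (sq_nonneg ‖w‖)]
      have hlin : |⟪x, w⟫ - t * ‖w‖ ^ 2| ≤ ‖w‖ * (1 + ‖w‖) * (1 + ‖x‖) := by
        have h3 : |⟪x, w⟫ - t * ‖w‖ ^ 2| ≤ ‖x‖ * ‖w‖ + ‖w‖ ^ 2 := by
          refine (abs_sub _ _).trans ?_
          have : |t * ‖w‖ ^ 2| ≤ ‖w‖ ^ 2 := by
            rw [abs_mul, abs_of_nonneg (sq_nonneg ‖w‖)]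
            nlinarith [sq_nonneg ‖w‖, abs_nonneg t]
          linarith
        nlinarith [norm_nonneg x, norm_nonneg w]
      rw [Real.norm_eq_abs, abs_mul, abs_mul, abs_mul,
        abs_of_pos hc, abs_of_pos (Real.exp_pos _)]
      calc |G x| * (c * Real.exp (-‖x - t • w‖ ^ 2 / 2) * |⟪x, w⟫ - t * ‖w‖ ^ 2|)
          ≤ (B * (1 + ‖x‖) ^ q) * (c * Real.exp (‖w‖ * ‖x‖ - ‖x‖ ^ 2 / 2) *
            (‖w‖ * (1 + ‖w‖) * (1 + ‖x‖))) := by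
            gcongr
            exact h0 x
        _ = (B * ‖w‖ * (1 + ‖w‖) * c) *
            (((1 + ‖x‖) ^ q * (1 + ‖x‖)) * Real.exp (‖w‖ * ‖x‖ - ‖x‖ ^ 2 / 2)) := by ring
        _ = (B * ‖w‖ * (1 + ‖w‖) * c) *
            ((1 + ‖x‖) ^ (q + 1) * Real.exp (‖w‖ * ‖x‖ - ‖x‖ ^ 2 / 2)) := by
            rw [Real.rpow_add_one (by positivity : (1:ℝ) + ‖x‖ ≠ 0)]))
    (master _ ‖w‖ (q + 1) (by linarith))
    (ae_of_all _ (fun x t _ => by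
      simp only [hfun x]
      have h1 : HasDerivAt (fun s : ℝ => ‖x‖ ^ 2 - 2 * (s * ⟪x, w⟫) + s ^ 2 * ‖w‖ ^ 2)
          (0 - 2 * (1 * ⟪x, w⟫) + 2 * t ^ 1 * ‖w‖ ^ 2) t := by
        exact ((hasDerivAt_const t (‖x‖ ^ 2)).sub
          (((hasDerivAt_id t).mul_const ⟪x, w⟫).const_mul 2)).add
          ((hasDerivAt_pow 2 t).mul_const (‖w‖ ^ 2))
      have h2 := ((((h1.fun_neg.div_const 2).exp.const_mul c).const_mul (G x)))
      refine h2.congr_deriv ?_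
      ring))
  have hC := keyC.2
  simp only [zero_smul, sub_zero, zero_mul] at hC
  have hPhiPsi : (fun t : ℝ => ∫ x : E, G (x + t • w) * (c * Real.exp (-‖x‖ ^ 2 / 2)) ∂volume)
      = fun t : ℝ => ∫ x : E, G x * (c * Real.exp (-‖x - t • w‖ ^ 2 / 2)) ∂volume := by
    funext t
    rw [← integral_add_right_eq_self
      (fun x : E => G x * (c * Real.exp (-‖x - t • w‖ ^ 2 / 2))) (t • w)]
    congr 1
    funext x
    rw [add_sub_cancel_right]
  rw [hPhiPsi] at hA
  have hD := hA.unique hC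
  rw [integral_std, integral_std]
  rw [hD]
  exact integral_congr_ae (ae_of_all _ fun x => by ring)

lemma step (f : EuclideanSpace ℝ (Fin N) → ℝ) (hf : ContDiff ℝ 1 f) (a : E) (A r : ℝ)
    (hr : 0 ≤ r) (hA : 0 ≤ A)
    (h0 : ∀ x, |f x| ≤ A * (1 + ‖x‖) ^ r) (h1 : ∀ x, ‖fderiv ℝ f x‖ ≤ A * (1 + ‖x‖) ^ r) :
    ContDiff ℝ 1 (fun x : E => f x * ⟪x, a⟫) ∧
    (∀ x y : E, fderiv ℝ (fun x : E => f x * ⟪x, a⟫) x y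
      = fderiv ℝ f x y * ⟪x, a⟫ + f x * ⟪y, a⟫) ∧
    (∀ x : E, |f x * ⟪x, a⟫| ≤ (2 * A * ‖a‖) * (1 + ‖x‖) ^ (r + 1)) ∧
    (∀ x : E, ‖fderiv ℝ (fun x : E => f x * ⟪x, a⟫) x‖
      ≤ (2 * A * ‖a‖) * (1 + ‖x‖) ^ (r + 1)) := by
  set La : EuclideanSpace ℝ (Fin N) →L[ℝ] ℝ :=
    LinearMap.toContinuousLinearMap ((innerₗ (EuclideanSpace ℝ (Fin N))).flip a) with hLa
  have hLaApp : ∀ y : E, La y = ⟪y, a⟫ := fun y => rfl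
  have hEq : (fun x : E => ⟪x, a⟫) = fun x => La x := by
    funext x; rw [hLaApp]
  have hdA : ∀ x : E, HasFDerivAt (fun y : E => ⟪y, a⟫) La x := by
    intro x; rw [hEq]; exact La.hasFDerivAt
  have hfd : ∀ x : E, HasFDerivAt (fun y : E => f y * ⟪y, a⟫)
      (f x • La + ⟪x, a⟫ • fderiv ℝ f x) x := by
    intro x
    exact ((hf.differentiable one_ne_zero x).hasFDerivAt.mul (hdA x))
  have hfd' : ∀ x : E, fderiv ℝ (fun y : E => f y * ⟪y, a⟫) x
      = f x • La + ⟪x, a⟫ • fderiv ℝ f x := fun x => (hfd x).fderiv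
  have hsplit : ∀ x : E, (1 + ‖x‖) ^ (r + 1) = (1 + ‖x‖) ^ r * (1 + ‖x‖) :=
    fun x => Real.rpow_add_one (by positivity) r
  have hP : ∀ x : E, (0:ℝ) ≤ (1 + ‖x‖) ^ r := fun x => by positivity
  refine ⟨?_, ?_, ?_, ?_⟩
  · refine hf.mul ?_
    rw [hEq]; exact La.contDiff
  · intro x y
    rw [hfd']
    simp only [ContinuousLinearMap.add_apply, ContinuousLinearMap.smul_apply, smul_eq_mul, hLaApp]
    ring
  · intro x
    rw [abs_mul, hsplit]
    calc |f x| * |⟪x, a⟫| ≤ (A * (1 + ‖x‖) ^ r) * (‖x‖ * ‖a‖) :=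
          mul_le_mul (h0 x) (abs_real_inner_le_norm x a) (abs_nonneg _)
            (by positivity)
      _ ≤ 2 * A * ‖a‖ * ((1 + ‖x‖) ^ r * (1 + ‖x‖)) := by
          nlinarith [hP x, norm_nonneg x, norm_nonneg a, mul_nonneg (mul_nonneg hA (hP x)) (norm_nonneg a)]
  · intro x
    rw [hfd']
    refine ContinuousLinearMap.opNorm_le_bound _ (by positivity) (fun y => ?_)
    have hb1 : |fderiv ℝ f x y| ≤ A * (1 + ‖x‖) ^ r * ‖y‖ := by
      calc |fderiv ℝ f x y| ≤ ‖fderiv ℝ f x‖ * ‖y‖ := (fderiv ℝ f x).le_opNorm y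
        _ ≤ A * (1 + ‖x‖) ^ r * ‖y‖ := mul_le_mul_of_nonneg_right (h1 x) (norm_nonneg y)
    have hb2 : |(f x • La + ⟪x, a⟫ • fderiv ℝ f x) y|
        ≤ |f x| * |⟪y, a⟫| + |⟪x, a⟫| * |fderiv ℝ f x y| := by
      simp only [ContinuousLinearMap.add_apply, ContinuousLinearMap.smul_apply, smul_eq_mul, hLaApp]
      refine (abs_add_le _ _).trans ?_
      rw [abs_mul, abs_mul]
    rw [Real.norm_eq_abs, hsplit]
    refine hb2.trans ?_
    have h3 : |f x| * |⟪y, a⟫| ≤ (A * (1 + ‖x‖) ^ r) * (‖y‖ * ‖a‖) :=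
      mul_le_mul (h0 x) (abs_real_inner_le_norm y a) (abs_nonneg _) (by positivity)
    have h4 : |⟪x, a⟫| * |fderiv ℝ f x y| ≤ (‖x‖ * ‖a‖) * (A * (1 + ‖x‖) ^ r * ‖y‖) :=
      mul_le_mul (abs_real_inner_le_norm x a) hb1 (abs_nonneg _) (by positivity)
    refine (add_le_add h3 h4).trans ?_
    nlinarith [hP x, norm_nonneg x, norm_nonneg a, norm_nonneg y,
      mul_nonneg (mul_nonneg hA (hP x)) (mul_nonneg (norm_nonneg a) (norm_nonneg y))]

/-- Gaussian integration by parts (third order): if `F : ℝ^N → ℝ` is `C³` with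
`|F(x)| ≤ C(1+|x|)^p` and `‖D^k F(x)‖ ≤ C(1+|x|)^p` for `k = 1, 2, 3`, then
`∫ F(x)(⟨x,u⟩⟨x,v⟩⟨x,w⟩ − ⟨u,v⟩⟨x,w⟩ − ⟨u,w⟩⟨x,v⟩ − ⟨v,w⟩⟨x,u⟩) dγ_N
  = ∫ D³F(x)(u,v,w) dγ_N`. -/
theorem stmt8 (N : ℕ) (hN : 1 ≤ N) (u v w : EuclideanSpace ℝ (Fin N))
    (F : EuclideanSpace ℝ (Fin N) → ℝ) (hF : ContDiff ℝ 3 F)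
    (C p : ℝ) (hC : 0 ≤ C) (hp : 1 ≤ p)
    (hF_bound : ∀ x, |F x| ≤ C * (1 + ‖x‖) ^ p)
    (hDF_bound : ∀ k, 1 ≤ k → k ≤ 3 → ∀ x, ‖iteratedFDeriv ℝ k F x‖ ≤ C * (1 + ‖x‖) ^ p) :
    ∫ x, F x * (⟪x, u⟫ * ⟪x, v⟫ * ⟪x, w⟫ - ⟪u, v⟫ * ⟪x, w⟫
        - ⟪u, w⟫ * ⟪x, v⟫ - ⟪v, w⟫ * ⟪x, u⟫) ∂(stdGaussian N)
      = ∫ x, iteratedFDeriv ℝ 3 F x ![u, v, w] ∂(stdGaussian N) := by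
  have hp0 : (0:ℝ) ≤ p := by linarith
  have hF1 : ContDiff ℝ 1 F := hF.of_le (by norm_num)
  have hFd2 : ContDiff ℝ 2 (fderiv ℝ F) := hF.fderiv_right (by norm_num)
  have hFd3 : ContDiff ℝ 1 (fderiv ℝ (fderiv ℝ F)) := hFd2.fderiv_right (by norm_num)
  have dF1 : Differentiable ℝ (fderiv ℝ F) := hFd2.differentiable (by norm_num)
  have dF2 : Differentiable ℝ (fderiv ℝ (fderiv ℝ F)) := hFd3.differentiable one_ne_zero
  -- operator norms of the successive derivatives
  have hnorm1 : ∀ x, ‖fderiv ℝ F x‖ ≤ C * (1 + ‖x‖) ^ p := by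
    intro x
    have e : ‖fderiv ℝ F x‖ = ‖iteratedFDeriv ℝ 1 F x‖ := by
      calc ‖fderiv ℝ F x‖ = ‖iteratedFDeriv ℝ 0 (fderiv ℝ F) x‖ :=
            (norm_iteratedFDeriv_zero).symm
        _ = ‖iteratedFDeriv ℝ (0+1) F x‖ := norm_iteratedFDeriv_fderiv
        _ = ‖iteratedFDeriv ℝ 1 F x‖ := rfl
    rw [e]; exact hDF_bound 1 le_rfl (by norm_num) x
  have hnorm2 : ∀ x, ‖fderiv ℝ (fderiv ℝ F) x‖ ≤ C * (1 + ‖x‖) ^ p := by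
    intro x
    have e : ‖fderiv ℝ (fderiv ℝ F) x‖ = ‖iteratedFDeriv ℝ 2 F x‖ := by
      calc ‖fderiv ℝ (fderiv ℝ F) x‖
          = ‖iteratedFDeriv ℝ 0 (fderiv ℝ (fderiv ℝ F)) x‖ :=
            (norm_iteratedFDeriv_zero (f := fderiv ℝ (fderiv ℝ F)) (x := x)).symm
        _ = ‖iteratedFDeriv ℝ (0+1) (fderiv ℝ F) x‖ := norm_iteratedFDeriv_fderiv
        _ = ‖iteratedFDeriv ℝ 1 (fderiv ℝ F) x‖ := rfl
        _ = ‖iteratedFDeriv ℝ (1+1) F x‖ := norm_iteratedFDeriv_fderiv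
        _ = ‖iteratedFDeriv ℝ 2 F x‖ := by norm_num
    rw [e]; exact hDF_bound 2 (by norm_num) (by norm_num) x
  -- the directional derivative functions
  have hD1b : ∀ x, |fderiv ℝ F x w| ≤ (C * ‖w‖) * (1 + ‖x‖) ^ p := by
    intro x
    calc |fderiv ℝ F x w| ≤ ‖fderiv ℝ F x‖ * ‖w‖ := (fderiv ℝ F x).le_opNorm w
      _ ≤ (C * (1 + ‖x‖) ^ p) * ‖w‖ :=
          mul_le_mul_of_nonneg_right (hnorm1 x) (norm_nonneg w)
      _ = (C * ‖w‖) * (1 + ‖x‖) ^ p := by ring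
  have hD1s : ContDiff ℝ 1 (fun x => fderiv ℝ F x w) :=
    (hFd2.clm_apply contDiff_const).of_le (by norm_num)
  have hfD1app : ∀ x y, fderiv ℝ (fun y => fderiv ℝ F y w) x y
      = fderiv ℝ (fderiv ℝ F) x y w := by
    intro x y
    rw [fderiv_clm_apply (dF1 x) (differentiableAt_const w)]
    simp
  have hfD1b : ∀ x, ‖fderiv ℝ (fun y => fderiv ℝ F y w) x‖ ≤ (C * ‖w‖) * (1 + ‖x‖) ^ p := by
    intro x
    refine ContinuousLinearMap.opNorm_le_bound _ (by positivity) (fun y => ?_)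
    rw [Real.norm_eq_abs, hfD1app x y]
    calc |fderiv ℝ (fderiv ℝ F) x y w| ≤ ‖fderiv ℝ (fderiv ℝ F) x y‖ * ‖w‖ :=
          (fderiv ℝ (fderiv ℝ F) x y).le_opNorm w
      _ ≤ (‖fderiv ℝ (fderiv ℝ F) x‖ * ‖y‖) * ‖w‖ :=
          mul_le_mul_of_nonneg_right ((fderiv ℝ (fderiv ℝ F) x).le_opNorm y) (norm_nonneg w)
      _ ≤ ((C * (1 + ‖x‖) ^ p) * ‖y‖) * ‖w‖ := by
          have := hnorm2 x
          gcongr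
      _ = (C * ‖w‖) * (1 + ‖x‖) ^ p * ‖y‖ := by ring
  have hgs : ContDiff ℝ 1 (fun x => fderiv ℝ (fderiv ℝ F) x v) :=
    hFd3.clm_apply contDiff_const
  have hD2s : ContDiff ℝ 1 (fun x => fderiv ℝ (fun y => fderiv ℝ F y w) x v) := by
    have h2 : ContDiff ℝ 1 (fun x => fderiv ℝ (fderiv ℝ F) x v w) :=
      hgs.clm_apply contDiff_const
    rw [show (fun x => fderiv ℝ (fun y => fderiv ℝ F y w) x v)
        = fun x => fderiv ℝ (fderiv ℝ F) x v w from funext fun x => hfD1app x v]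
    exact h2
  have hD2b : ∀ x, |fderiv ℝ (fun y => fderiv ℝ F y w) x v|
      ≤ (C * (‖v‖ * ‖w‖)) * (1 + ‖x‖) ^ p := by
    intro x
    rw [hfD1app x v]
    calc |fderiv ℝ (fderiv ℝ F) x v w| ≤ ‖fderiv ℝ (fderiv ℝ F) x v‖ * ‖w‖ :=
          (fderiv ℝ (fderiv ℝ F) x v).le_opNorm w
      _ ≤ (‖fderiv ℝ (fderiv ℝ F) x‖ * ‖v‖) * ‖w‖ :=
          mul_le_mul_of_nonneg_right ((fderiv ℝ (fderiv ℝ F) x).le_opNorm v) (norm_nonneg w)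
      _ ≤ ((C * (1 + ‖x‖) ^ p) * ‖v‖) * ‖w‖ := by
          have := hnorm2 x
          gcongr
      _ = (C * (‖v‖ * ‖w‖)) * (1 + ‖x‖) ^ p := by ring
  have hfD2app : ∀ x y, fderiv ℝ (fun z => fderiv ℝ (fun y => fderiv ℝ F y w) z v) x y
      = fderiv ℝ (fderiv ℝ (fderiv ℝ F)) x y v w := by
    intro x y
    rw [show (fun z => fderiv ℝ (fun y => fderiv ℝ F y w) z v)
        = fun z => fderiv ℝ (fderiv ℝ F) z v w from funext fun z => hfD1app z v]
    have e1 : fderiv ℝ (fun z => fderiv ℝ (fderiv ℝ F) z v) x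
        = (fderiv ℝ (fderiv ℝ (fderiv ℝ F)) x).flip v := by
      rw [fderiv_clm_apply (dF2 x) (differentiableAt_const v)]
      simp
    rw [fderiv_clm_apply ((hgs.differentiable one_ne_zero) x) (differentiableAt_const w)]
    simp [e1]
  have hfD2b : ∀ x, ‖fderiv ℝ (fun z => fderiv ℝ (fun y => fderiv ℝ F y w) z v) x‖
      ≤ (C * (‖v‖ * ‖w‖)) * (1 + ‖x‖) ^ p := by
    intro x
    refine ContinuousLinearMap.opNorm_le_bound _ (by positivity) (fun y => ?_)
    rw [Real.norm_eq_abs, hfD2app x y]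
    have hrep : fderiv ℝ (fderiv ℝ (fderiv ℝ F)) x y v w = iteratedFDeriv ℝ 3 F x ![y, v, w] := by
      calc fderiv ℝ (fderiv ℝ (fderiv ℝ F)) x y v w
          = fderiv ℝ (fderiv ℝ (fun y => fderiv ℝ F y)) x (Fin.init ![y, v, w] 0)
            (Fin.init ![y, v, w] 1) (![y, v, w] (Fin.last 2)) := rfl
        _ = iteratedFDeriv ℝ 2 (fun y => fderiv ℝ F y) x (Fin.init ![y, v, w])
            (![y, v, w] (Fin.last 2)) := by rw [iteratedFDeriv_two_apply]
        _ = iteratedFDeriv ℝ 3 F x ![y, v, w] :=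
            (iteratedFDeriv_succ_apply_right (n := 2) ![y, v, w]).symm
    rw [hrep]
    calc |iteratedFDeriv ℝ 3 F x ![y, v, w]|
        ≤ ‖iteratedFDeriv ℝ 3 F x‖ * ∏ i, ‖![y, v, w] i‖ :=
          (iteratedFDeriv ℝ 3 F x).le_opNorm _
      _ = ‖iteratedFDeriv ℝ 3 F x‖ * (‖y‖ * ‖v‖ * ‖w‖) := by
          rw [Fin.prod_univ_three]; rfl
      _ ≤ (C * (1 + ‖x‖) ^ p) * (‖y‖ * ‖v‖ * ‖w‖) :=
          mul_le_mul_of_nonneg_right (hDF_bound 3 (by norm_num) le_rfl x) (by positivity)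
      _ = (C * (‖v‖ * ‖w‖)) * (1 + ‖x‖) ^ p * ‖y‖ := by ring
  -- products via `step`
  obtain ⟨sFu, dFu, bFu, b'Fu⟩ := step F hF1 u C p hp0 hC hF_bound hnorm1
  obtain ⟨-, -, bFv, -⟩ := step F hF1 v C p hp0 hC hF_bound hnorm1
  obtain ⟨-, -, bFw, -⟩ := step F hF1 w C p hp0 hC hF_bound hnorm1
  obtain ⟨sFuv, dFuv, bFuv, b'Fuv⟩ := step (fun x => F x * ⟪x, u⟫) sFu v (2*C*‖u‖) (p+1)
    (by linarith) (by positivity) bFu b'Fu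
  obtain ⟨-, -, bFuvw, -⟩ := step (fun x => F x * ⟪x, u⟫ * ⟪x, v⟫) (by exact sFuv) w
    (2*(2*C*‖u‖)*‖v‖) ((p+1)+1) (by linarith) (by positivity) (fun x => bFuv x) (fun x => b'Fuv x)
  obtain ⟨sD1u, dD1u, bD1u, b'D1u⟩ := step (fun x => fderiv ℝ F x w) hD1s u (C*‖w‖) p hp0
    (by positivity) hD1b hfD1b
  obtain ⟨-, -, bD1uv, -⟩ := step (fun x => fderiv ℝ F x w * ⟪x, u⟫) sD1u v (2*(C*‖w‖)*‖u‖)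
    (p+1) (by linarith) (by positivity) bD1u b'D1u
  obtain ⟨-, -, bD2u, -⟩ := step (fun x => fderiv ℝ (fun y => fderiv ℝ F y w) x v) hD2s u
    (C*(‖v‖*‖w‖)) p hp0 (by positivity) hD2b hfD2b
  -- continuity
  have cinner : ∀ a : EuclideanSpace ℝ (Fin N), Continuous (fun x : EuclideanSpace ℝ (Fin N) => ⟪x, a⟫) :=
    fun a => continuous_id.inner continuous_const
  have cF := hF.continuous
  have cD1 := hD1s.continuous
  have cD2 := hD2s.continuous
  have cD3 : Continuous (fun x => fderiv ℝ (fun z => fderiv ℝ (fun y => fderiv ℝ F y w) z v) x u) :=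
    (ContinuousLinearMap.apply ℝ ℝ u).continuous.comp (hD2s.continuous_fderiv one_ne_zero)
  have hD3b : ∀ x, |fderiv ℝ (fun z => fderiv ℝ (fun y => fderiv ℝ F y w) z v) x u|
      ≤ (C*(‖v‖*‖w‖)*‖u‖) * (1 + ‖x‖) ^ p := by
    intro x
    calc |fderiv ℝ (fun z => fderiv ℝ (fun y => fderiv ℝ F y w) z v) x u|
        ≤ ‖fderiv ℝ (fun z => fderiv ℝ (fun y => fderiv ℝ F y w) z v) x‖ * ‖u‖ :=
          (fderiv ℝ (fun z => fderiv ℝ (fun y => fderiv ℝ F y w) z v) x).le_opNorm u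
      _ ≤ ((C*(‖v‖*‖w‖)) * (1 + ‖x‖) ^ p) * ‖u‖ :=
          mul_le_mul_of_nonneg_right (hfD2b x) (norm_nonneg u)
      _ = (C*(‖v‖*‖w‖)*‖u‖) * (1 + ‖x‖) ^ p := by ring
  -- integrability with respect to the Gaussian measure
  have iFu : Integrable (fun x => F x * ⟪x, u⟫) (stdGaussian N) :=
    integrable_mu _ (cF.mul (cinner u)) _ _ (by linarith) bFu
  have iFv : Integrable (fun x => F x * ⟪x, v⟫) (stdGaussian N) :=
    integrable_mu _ (cF.mul (cinner v)) _ _ (by linarith) bFv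
  have iFw : Integrable (fun x => F x * ⟪x, w⟫) (stdGaussian N) :=
    integrable_mu _ (cF.mul (cinner w)) _ _ (by linarith) bFw
  have iFuvw : Integrable (fun x => F x * ⟪x, u⟫ * ⟪x, v⟫ * ⟪x, w⟫) (stdGaussian N) :=
    integrable_mu _ (((cF.mul (cinner u)).mul (cinner v)).mul (cinner w)) _ _
      (by linarith) (fun x => bFuvw x)
  have iD1 : Integrable (fun x => fderiv ℝ F x w) (stdGaussian N) :=
    integrable_mu _ cD1 _ _ hp0 hD1b
  have iD1uv : Integrable (fun x => fderiv ℝ F x w * ⟪x, u⟫ * ⟪x, v⟫) (stdGaussian N) :=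
    integrable_mu _ ((cD1.mul (cinner u)).mul (cinner v)) _ _ (by linarith) (fun x => bD1uv x)
  have iD2u : Integrable (fun x => fderiv ℝ (fun y => fderiv ℝ F y w) x v * ⟪x, u⟫)
      (stdGaussian N) :=
    integrable_mu _ (cD2.mul (cinner u)) _ _ (by linarith) (fun x => bD2u x)
  -- integration by parts identities
  have E1 : ∫ x, F x * ⟪x, w⟫ ∂(stdGaussian N) = ∫ x, fderiv ℝ F x w ∂(stdGaussian N) :=
    ibp F hF1 w C p hp0 hF_bound hnorm1
  have Ea : ∫ x, F x * ⟪x, u⟫ * ⟪x, v⟫ * ⟪x, w⟫ ∂(stdGaussian N)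
      = ∫ x, fderiv ℝ (fun x => F x * ⟪x, u⟫ * ⟪x, v⟫) x w ∂(stdGaussian N) := by
    exact ibp (fun x => F x * ⟪x, u⟫ * ⟪x, v⟫) (by exact sFuv) w (2*(2*C*‖u‖)*‖v‖) ((p+1)+1)
      (by linarith) (fun x => bFuv x) (fun x => b'Fuv x)
  have Eaformula : ∀ x : EuclideanSpace ℝ (Fin N),
      fderiv ℝ (fun x => F x * ⟪x, u⟫ * ⟪x, v⟫) x w
      = fderiv ℝ F x w * ⟪x, u⟫ * ⟪x, v⟫ + (⟪w, u⟫ * (F x * ⟪x, v⟫) + ⟪w, v⟫ * (F x * ⟪x, u⟫)) := by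
    intro x
    have h1 : fderiv ℝ (fun x => F x * ⟪x, u⟫ * ⟪x, v⟫) x w
        = fderiv ℝ (fun x => F x * ⟪x, u⟫) x w * ⟪x, v⟫ + (F x * ⟪x, u⟫) * ⟪w, v⟫ := dFuv x w
    have h2 : fderiv ℝ (fun x => F x * ⟪x, u⟫) x w
        = fderiv ℝ F x w * ⟪x, u⟫ + F x * ⟪w, u⟫ := dFu x w
    rw [h1, h2]; ring
  have Ea3 : ∫ x, F x * ⟪x, u⟫ * ⟪x, v⟫ * ⟪x, w⟫ ∂(stdGaussian N)
      = (∫ x, fderiv ℝ F x w * ⟪x, u⟫ * ⟪x, v⟫ ∂(stdGaussian N))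
        + (⟪w, u⟫ * ∫ x, F x * ⟪x, v⟫ ∂(stdGaussian N)
          + ⟪w, v⟫ * ∫ x, F x * ⟪x, u⟫ ∂(stdGaussian N)) := by
    have j1 : Integrable (fun x => ⟪w, u⟫ * (F x * ⟪x, v⟫) + ⟪w, v⟫ * (F x * ⟪x, u⟫))
        (stdGaussian N) := (iFv.const_mul ⟪w, u⟫).add (iFu.const_mul ⟪w, v⟫)
    rw [Ea, integral_congr_ae (ae_of_all _ Eaformula),
      integral_add iD1uv j1,
      integral_add (iFv.const_mul ⟪w, u⟫) (iFu.const_mul ⟪w, v⟫),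
      integral_const_mul, integral_const_mul]
  have Eb : ∫ x, fderiv ℝ F x w * ⟪x, u⟫ * ⟪x, v⟫ ∂(stdGaussian N)
      = ∫ x, fderiv ℝ (fun x => fderiv ℝ F x w * ⟪x, u⟫) x v ∂(stdGaussian N) := by
    exact ibp (fun x => fderiv ℝ F x w * ⟪x, u⟫) sD1u v (2*(C*‖w‖)*‖u‖) (p+1)
      (by linarith) bD1u b'D1u
  have Ebformula : ∀ x : EuclideanSpace ℝ (Fin N),
      fderiv ℝ (fun x => fderiv ℝ F x w * ⟪x, u⟫) x v
      = fderiv ℝ (fun y => fderiv ℝ F y w) x v * ⟪x, u⟫ + ⟪v, u⟫ * fderiv ℝ F x w := by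
    intro x
    have h1 : fderiv ℝ (fun x => fderiv ℝ F x w * ⟪x, u⟫) x v
        = fderiv ℝ (fun y => fderiv ℝ F y w) x v * ⟪x, u⟫ + (fderiv ℝ F x w) * ⟪v, u⟫ :=
      dD1u x v
    rw [h1]; ring
  have Eb3 : ∫ x, fderiv ℝ F x w * ⟪x, u⟫ * ⟪x, v⟫ ∂(stdGaussian N)
      = (∫ x, fderiv ℝ (fun y => fderiv ℝ F y w) x v * ⟪x, u⟫ ∂(stdGaussian N))
        + ⟪v, u⟫ * ∫ x, fderiv ℝ F x w ∂(stdGaussian N) := by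
    rw [Eb, integral_congr_ae (ae_of_all _ Ebformula),
      integral_add iD2u (iD1.const_mul ⟪v, u⟫), integral_const_mul]
  have Ec : ∫ x, fderiv ℝ (fun y => fderiv ℝ F y w) x v * ⟪x, u⟫ ∂(stdGaussian N)
      = ∫ x, fderiv ℝ (fun z => fderiv ℝ (fun y => fderiv ℝ F y w) z v) x u ∂(stdGaussian N) :=
    ibp (fun x => fderiv ℝ (fun y => fderiv ℝ F y w) x v) hD2s u (C*(‖v‖*‖w‖)) p hp0 hD2b hfD2b
  -- identification of the third derivative
  have hiter : ∀ x : EuclideanSpace ℝ (Fin N), iteratedFDeriv ℝ 3 F x ![u, v, w]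
      = fderiv ℝ (fun z => fderiv ℝ (fun y => fderiv ℝ F y w) z v) x u := by
    intro x
    rw [hfD2app x u]
    calc iteratedFDeriv ℝ 3 F x ![u, v, w]
        = iteratedFDeriv ℝ 2 (fun y => fderiv ℝ F y) x (Fin.init ![u, v, w])
          (![u, v, w] (Fin.last 2)) := iteratedFDeriv_succ_apply_right (n := 2) ![u, v, w]
      _ = fderiv ℝ (fderiv ℝ (fun y => fderiv ℝ F y)) x (Fin.init ![u, v, w] 0)
          (Fin.init ![u, v, w] 1) (![u, v, w] (Fin.last 2)) := by
          rw [iteratedFDeriv_two_apply]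
      _ = fderiv ℝ (fderiv ℝ (fderiv ℝ F)) x u v w := rfl
  have hRHS : ∫ x, iteratedFDeriv ℝ 3 F x ![u, v, w] ∂(stdGaussian N)
      = ∫ x, fderiv ℝ (fun z => fderiv ℝ (fun y => fderiv ℝ F y w) z v) x u ∂(stdGaussian N) :=
    integral_congr_ae (ae_of_all _ hiter)
  -- final assembly
  rw [show (fun x => F x * (⟪x, u⟫ * ⟪x, v⟫ * ⟪x, w⟫ - ⟪u, v⟫ * ⟪x, w⟫
        - ⟪u, w⟫ * ⟪x, v⟫ - ⟪v, w⟫ * ⟪x, u⟫))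
      = fun x => F x * ⟪x, u⟫ * ⟪x, v⟫ * ⟪x, w⟫ - ⟪u, v⟫ * (F x * ⟪x, w⟫)
        - ⟪u, w⟫ * (F x * ⟪x, v⟫) - ⟪v, w⟫ * (F x * ⟪x, u⟫)
      from funext fun x => by ring]
  have k1 : Integrable (fun x => F x * ⟪x, u⟫ * ⟪x, v⟫ * ⟪x, w⟫
      - ⟪u, v⟫ * (F x * ⟪x, w⟫)) (stdGaussian N) := iFuvw.sub (iFw.const_mul ⟪u, v⟫)
  have k2 : Integrable (fun x => F x * ⟪x, u⟫ * ⟪x, v⟫ * ⟪x, w⟫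
      - ⟪u, v⟫ * (F x * ⟪x, w⟫) - ⟪u, w⟫ * (F x * ⟪x, v⟫)) (stdGaussian N) :=
    k1.sub (iFv.const_mul ⟪u, w⟫)
  rw [integral_sub k2 (iFu.const_mul ⟪v, w⟫),
    integral_sub k1 (iFv.const_mul ⟪u, w⟫),
    integral_sub iFuvw (iFw.const_mul ⟪u, v⟫),
    integral_const_mul, integral_const_mul, integral_const_mul]
  rw [hRHS, Ea3, Eb3, Ec, E1]
  rw [real_inner_comm w u, real_inner_comm w v, real_inner_comm v u]
  ring
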